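/- Let β₀, β₁, κ > 0 and for t > 0 define the rotation θ_t := ∇ v_t, where v_t(x) = t³ V(x/t) + g(x), V(y₁,y₂) = y₁ e^{−y₁} cos(y₂) and g(x₁,x₂) = sin(πx₁) sin(πx₂). Then θ_t converges to ∇g in H² of the unit square as t → 0⁺: for every pair (a, b) of natural numbers with a + b ≤ 2 and each component i = 1, 2, lim_{t → 0⁺} ∫_{(0,1)²} |∂₁^a ∂₂^b ((θ_t)_i − ∂ᵢ g)(x)|² dx = 0. In particular the H² norm of θ_t on (0,1)² remains bounded, and bounded away from zero, as t → 0⁺. -/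

import Mathlib

noncomputable section

open Real MeasureTheory Filter

/-- First partial derivative `∂₁` of a function on `ℝ²`. -/
def pd1 (f : ℝ × ℝ → ℝ) : ℝ × ℝ → ℝ := fun p => deriv (fun s => f (s, p.2)) p.1

/-- Second partial derivative `∂₂` of a function on `ℝ²`. -/
def pd2 (f : ℝ × ℝ → ℝ) : ℝ × ℝ → ℝ := fun p => deriv (fun s => f (p.1, s)) p.2

/-- `V(y₁, y₂) = y₁ e^{−y₁} cos(y₂)`. -/
def V : ℝ × ℝ → ℝ := fun y => y.1 * Real.exp (-y.1) * Real.cos y.2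

/-- `g(x₁, x₂) = sin(π x₁) sin(π x₂)`. -/
def g : ℝ × ℝ → ℝ := fun x => Real.sin (π * x.1) * Real.sin (π * x.2)

/-- `v_t(x) = t³ V(x/t) + g(x)`. -/
def vt (t : ℝ) : ℝ × ℝ → ℝ := fun x => t ^ 3 * V (x.1 / t, x.2 / t) + g x

/-- First component of the rotation `θ_t = ∇ v_t`. -/
def θ1 (t : ℝ) : ℝ × ℝ → ℝ := pd1 (vt t)

/-- Second component of the rotation `θ_t = ∇ v_t`. -/
def θ2 (t : ℝ) : ℝ × ℝ → ℝ := pd2 (vt t)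

/-- The open unit square `(0,1)² ⊂ ℝ²`. -/
def usq : Set (ℝ × ℝ) := Set.Ioo (0 : ℝ) 1 ×ˢ Set.Ioo (0 : ℝ) 1

def Pf (α β : ℝ) : ℝ → ℝ := fun x => (α + β * x) * Real.exp (-x)
def Tf (k : ℕ) : ℝ → ℝ := fun x => Real.cos (x + k * (π / 2))
def Gf (t c α β : ℝ) (m : ℕ) : ℝ × ℝ → ℝ := fun y => c * (Pf α β (y.1 / t) * Tf m (y.2 / t))
def Ff (c : ℝ) (j k : ℕ) (t c' α β : ℝ) (m : ℕ) : ℝ × ℝ → ℝ :=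
  fun y => c * (Tf j (π * y.1) * Tf k (π * y.2)) + Gf t c' α β m y

lemma hasDerivAt_Pf (α β x : ℝ) : HasDerivAt (Pf α β) (Pf (β - α) (-β) x) x := by
  have h1 : HasDerivAt (fun x : ℝ => α + β * x) β x := by
    simpa using ((hasDerivAt_id x).const_mul β).const_add α
  have h2 : HasDerivAt (fun x : ℝ => Real.exp (-x)) (-Real.exp (-x)) x := by
    simpa [Function.comp_def] using (Real.hasDerivAt_exp (-x)).comp x (hasDerivAt_neg x)
  have h := h1.mul h2
  have e : Pf (β - α) (-β) x = β * Real.exp (-x) + (α + β * x) * -Real.exp (-x) := by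
    simp only [Pf]; ring
  rw [e]; exact h

lemma hasDerivAt_Tf (k : ℕ) (x : ℝ) : HasDerivAt (Tf k) (Tf (k + 1) x) x := by
  have h : HasDerivAt (fun x : ℝ => Real.cos (x + (k : ℝ) * (π / 2)))
      (-Real.sin (x + (k : ℝ) * (π / 2))) x := by
    simpa [Function.comp_def] using (Real.hasDerivAt_cos (x + (k : ℝ) * (π / 2))).comp x
      ((hasDerivAt_id x).add_const ((k : ℝ) * (π / 2)))
  have e : Tf (k + 1) x = -Real.sin (x + (k : ℝ) * (π / 2)) := by
    rw [show Tf (k + 1) x = Real.cos ((x + (k : ℝ) * (π / 2)) + π / 2) by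
      unfold Tf; congr 1; push_cast; ring]
    exact Real.cos_add_pi_div_two _
  rw [e]; exact h

lemma hasDerivAt_P_scaled (t c α β : ℝ) (w x : ℝ) :
    HasDerivAt (fun s : ℝ => c * (Pf α β (s / t) * w))
      (c / t * (Pf (β - α) (-β) (x / t) * w)) x := by
  have h1 : HasDerivAt (fun s : ℝ => s / t) (1 / t) x := by
    simpa using (hasDerivAt_id x).div_const t
  have h3 := (((hasDerivAt_Pf α β (x / t)).comp x h1).mul_const w).const_mul c
  have e : c / t * (Pf (β - α) (-β) (x / t) * w)
      = c * (Pf (β - α) (-β) (x / t) * (1 / t) * w) := by ring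
  rw [e]; exact h3

lemma hasDerivAt_T_scaled (t c : ℝ) (m : ℕ) (w x : ℝ) :
    HasDerivAt (fun s : ℝ => c * (w * Tf m (s / t)))
      (c / t * (w * Tf (m + 1) (x / t))) x := by
  have h1 : HasDerivAt (fun s : ℝ => s / t) (1 / t) x := by
    simpa using (hasDerivAt_id x).div_const t
  have h3 := (((hasDerivAt_Tf m (x / t)).comp x h1).const_mul w).const_mul c
  have e : c / t * (w * Tf (m + 1) (x / t)) = c * (w * (Tf (m + 1) (x / t) * (1 / t))) := by ring
  rw [e]; exact h3

lemma hasDerivAt_Tpi1 (c : ℝ) (j : ℕ) (w x : ℝ) :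
    HasDerivAt (fun s : ℝ => c * (Tf j (π * s) * w)) (c * π * (Tf (j + 1) (π * x) * w)) x := by
  have h1 : HasDerivAt (fun s : ℝ => π * s) π x := by
    simpa using (hasDerivAt_id x).const_mul π
  have h3 := (((hasDerivAt_Tf j (π * x)).comp x h1).mul_const w).const_mul c
  have e : c * π * (Tf (j + 1) (π * x) * w) = c * (Tf (j + 1) (π * x) * π * w) := by ring
  rw [e]; exact h3

lemma hasDerivAt_Tpi2 (c : ℝ) (k : ℕ) (w x : ℝ) :
    HasDerivAt (fun s : ℝ => c * (w * Tf k (π * s))) (c * π * (w * Tf (k + 1) (π * x))) x := by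
  have h1 : HasDerivAt (fun s : ℝ => π * s) π x := by
    simpa using (hasDerivAt_id x).const_mul π
  have h3 := (((hasDerivAt_Tf k (π * x)).comp x h1).const_mul w).const_mul c
  have e : c * π * (w * Tf (k + 1) (π * x)) = c * (w * (Tf (k + 1) (π * x) * π)) := by ring
  rw [e]; exact h3

lemma Tf0 (x : ℝ) : Tf 0 x = Real.cos x := by simp [Tf]
lemma Tf3 (x : ℝ) : Tf 3 x = Real.sin x := by
  unfold Tf
  rw [show x + ((3:ℕ):ℝ) * (π / 2) = (x + π / 2) + π by push_cast; ring,
    Real.cos_add_pi, Real.cos_add_pi_div_two]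
  ring

lemma pd1_Gf (t c α β : ℝ) (m : ℕ) : pd1 (Gf t c α β m) = Gf t (c / t) (β - α) (-β) m := by
  funext y
  exact (hasDerivAt_P_scaled t c α β (Tf m (y.2 / t)) y.1).deriv

lemma pd2_Gf (t c α β : ℝ) (m : ℕ) : pd2 (Gf t c α β m) = Gf t (c / t) α β (m + 1) := by
  funext y
  exact (hasDerivAt_T_scaled t c m (Pf α β (y.1 / t)) y.2).deriv

lemma pd1_Ff (c : ℝ) (j k : ℕ) (t c' α β : ℝ) (m : ℕ) :
    pd1 (Ff c j k t c' α β m) = Ff (c * π) (j + 1) k t (c' / t) (β - α) (-β) m := by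
  funext y
  exact ((hasDerivAt_Tpi1 c j (Tf k (π * y.2)) y.1).add
    (hasDerivAt_P_scaled t c' α β (Tf m (y.2 / t)) y.1)).deriv

lemma pd2_Ff (c : ℝ) (j k : ℕ) (t c' α β : ℝ) (m : ℕ) :
    pd2 (Ff c j k t c' α β m) = Ff (c * π) j (k + 1) t (c' / t) α β (m + 1) := by
  funext y
  exact ((hasDerivAt_Tpi2 c k (Tf j (π * y.1)) y.2).add
    (hasDerivAt_T_scaled t c' m (Pf α β (y.1 / t)) y.2)).deriv

lemma cont_Pf (α β : ℝ) : Continuous (Pf α β) := by unfold Pf; fun_prop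
lemma cont_Tf (k : ℕ) : Continuous (Tf k) := by unfold Tf; fun_prop
lemma cont_Gf (t c α β : ℝ) (m : ℕ) : Continuous (Gf t c α β m) :=
  continuous_const.mul (((cont_Pf α β).comp (continuous_fst.div_const t)).mul
    ((cont_Tf m).comp (continuous_snd.div_const t)))
lemma cont_Ff (c : ℝ) (j k : ℕ) (t c' α β : ℝ) (m : ℕ) : Continuous (Ff c j k t c' α β m) :=
  (continuous_const.mul (((cont_Tf j).comp (continuous_const.mul continuous_fst)).mul
    ((cont_Tf k).comp (continuous_const.mul continuous_snd)))).add (cont_Gf t c' α β m)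

lemma meas_usq : MeasurableSet usq := measurableSet_Ioo.prod measurableSet_Ioo

lemma integrableOn_usq {f : ℝ × ℝ → ℝ} (hf : Continuous f) : IntegrableOn f usq := by
  have h1 : usq ⊆ Set.Icc ((0:ℝ), (0:ℝ)) (1, 1) := by
    rw [← Set.Icc_prod_Icc]
    exact Set.prod_mono Set.Ioo_subset_Icc_self Set.Ioo_subset_Icc_self
  exact (hf.continuousOn.integrableOn_compact isCompact_Icc).mono_set h1

lemma int_sq_nonneg (f : ℝ × ℝ → ℝ) : 0 ≤ ∫ x in usq, (f x) ^ 2 :=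
  setIntegral_nonneg meas_usq fun x _ => sq_nonneg _

lemma Pf_sq_le (α β : ℝ) {u : ℝ} (hu : 0 ≤ u) :
    (Pf α β u) ^ 2 ≤ (2 * α ^ 2 + 8 * β ^ 2) * Real.exp (-u) := by
  have h1 : (1:ℝ) ≤ Real.exp u := Real.one_le_exp hu
  have h2 : u ^ 2 ≤ 4 * Real.exp u := by
    have e1 := Real.add_one_le_exp (u / 2)
    have e3 : (u / 2 + 1) ^ 2 ≤ (Real.exp (u / 2)) ^ 2 :=
      pow_le_pow_left₀ (by linarith) e1 2
    have e2 : (Real.exp (u / 2)) ^ 2 = Real.exp u := by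
      rw [sq, ← Real.exp_add, add_halves]
    nlinarith [e3, hu]
  have key : (α + β * u) ^ 2 ≤ (2 * α ^ 2 + 8 * β ^ 2) * Real.exp u := by
    nlinarith [sq_nonneg (α - β * u), mul_nonneg (sq_nonneg α) (sub_nonneg.2 h1),
      mul_nonneg (sq_nonneg β) (sub_nonneg.2 h2)]
  have hpos := Real.exp_pos (-u)
  have hexp : Real.exp u * Real.exp (-u) = 1 := by rw [← Real.exp_add]; simp
  have h3 : (Pf α β u) ^ 2 = (α + β * u) ^ 2 * Real.exp (-u) * Real.exp (-u) := by
    simp only [Pf]; ring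
  rw [h3]
  have h4 : (α + β * u) ^ 2 * Real.exp (-u) ≤ 2 * α ^ 2 + 8 * β ^ 2 := by
    calc (α + β * u) ^ 2 * Real.exp (-u)
        ≤ (2 * α ^ 2 + 8 * β ^ 2) * Real.exp u * Real.exp (-u) :=
          mul_le_mul_of_nonneg_right key hpos.le
      _ = (2 * α ^ 2 + 8 * β ^ 2) * (Real.exp u * Real.exp (-u)) := by ring
      _ = 2 * α ^ 2 + 8 * β ^ 2 := by rw [hexp, mul_one]
  exact mul_le_mul_of_nonneg_right h4 hpos.le

lemma exp_int_le {t : ℝ} (ht : 0 < t) : ∫ x in Set.Ioo (0:ℝ) 1, Real.exp (-(x / t)) ≤ t := by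
  rw [← MeasureTheory.integral_Ioc_eq_integral_Ioo,
    ← intervalIntegral.integral_of_le (by norm_num : (0:ℝ) ≤ 1)]
  have hF : ∀ x ∈ Set.uIcc (0:ℝ) 1,
      HasDerivAt (fun x => -t * Real.exp (-(x / t))) (Real.exp (-(x / t))) x := by
    intro x _
    have h1 : HasDerivAt (fun x : ℝ => -(x / t)) (-(1 / t)) x := by
      simpa [Pi.neg_def] using ((hasDerivAt_id x).div_const t).neg
    have h2 := ((Real.hasDerivAt_exp (-(x / t))).comp x h1).const_mul (-t)
    have e : Real.exp (-(x / t)) = -t * (Real.exp (-(x / t)) * -(1 / t)) := by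
      field_simp
    rw [e]; exact h2
  have hint : IntervalIntegrable (fun x => Real.exp (-(x / t))) volume 0 1 :=
    (by fun_prop : Continuous fun x : ℝ => Real.exp (-(x / t))).intervalIntegrable 0 1
  rw [intervalIntegral.integral_eq_sub_of_hasDerivAt hF hint]
  have hE := Real.exp_pos (-(1 / t))
  have h0 : -(0:ℝ) / t = 0 := by norm_num
  rw [show (0:ℝ) / t = 0 from zero_div t]  -- may not appear; handled below
  nlinarith [Real.exp_pos (-(1 / t)), Real.exp_zero, mul_pos ht hE]

lemma Tf_sq_le_one (k : ℕ) (x : ℝ) : (Tf k x) ^ 2 ≤ 1 := Real.cos_sq_le_one _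

lemma one_int : ∫ _x in Set.Ioo (0:ℝ) 1, (1:ℝ) = 1 := by simp

lemma Gf_sq_int_le (c α β : ℝ) (m : ℕ) {t : ℝ} (ht : 0 < t) :
    ∫ y in usq, (Gf t c α β m y) ^ 2 ≤ c ^ 2 * ((2 * α ^ 2 + 8 * β ^ 2) * t) := by
  have hb : ∀ y ∈ usq, (Gf t c α β m y) ^ 2
      ≤ c ^ 2 * (2 * α ^ 2 + 8 * β ^ 2) * Real.exp (-(y.1 / t)) := by
    intro y hy
    have hy1 : 0 ≤ y.1 / t := div_nonneg hy.1.1.le ht.le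
    have h1 := Pf_sq_le α β hy1
    have h2 : (Tf m (y.2 / t)) ^ 2 ≤ 1 := Tf_sq_le_one _ _
    have h3 : (Gf t c α β m y) ^ 2
        = c ^ 2 * ((Pf α β (y.1 / t)) ^ 2 * (Tf m (y.2 / t)) ^ 2) := by
      simp only [Gf]; ring
    rw [h3]
    have hP : (0:ℝ) ≤ (Pf α β (y.1 / t)) ^ 2 := sq_nonneg _
    have s1 : (Pf α β (y.1 / t)) ^ 2 * (Tf m (y.2 / t)) ^ 2
        ≤ (2 * α ^ 2 + 8 * β ^ 2) * Real.exp (-(y.1 / t)) :=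
      le_trans (by nlinarith) h1
    calc c ^ 2 * ((Pf α β (y.1 / t)) ^ 2 * (Tf m (y.2 / t)) ^ 2)
        ≤ c ^ 2 * ((2 * α ^ 2 + 8 * β ^ 2) * Real.exp (-(y.1 / t))) :=
          mul_le_mul_of_nonneg_left s1 (sq_nonneg c)
      _ = c ^ 2 * (2 * α ^ 2 + 8 * β ^ 2) * Real.exp (-(y.1 / t)) := by ring
  have hInt1 : IntegrableOn (fun y : ℝ × ℝ => (Gf t c α β m y) ^ 2) usq :=
    integrableOn_usq ((cont_Gf t c α β m).pow 2)
  have hInt2 : IntegrableOn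
      (fun y : ℝ × ℝ => c ^ 2 * (2 * α ^ 2 + 8 * β ^ 2) * Real.exp (-(y.1 / t))) usq :=
    integrableOn_usq (by fun_prop)
  have step := setIntegral_mono_on hInt1 hInt2 meas_usq hb
  refine le_trans step ?_
  rw [MeasureTheory.integral_const_mul]
  have hprod : ∫ y in usq, Real.exp (-(y.1 / t))
      = (∫ x in Set.Ioo (0:ℝ) 1, Real.exp (-(x / t))) * ∫ _x in Set.Ioo (0:ℝ) 1, (1:ℝ) := by
    have h := MeasureTheory.setIntegral_prod_mul (μ := (volume : Measure ℝ))
      (ν := (volume : Measure ℝ)) (fun x : ℝ => Real.exp (-(x / t))) (fun _ : ℝ => (1:ℝ))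
      (Set.Ioo 0 1) (Set.Ioo 0 1)
    simpa [usq, ← MeasureTheory.Measure.volume_eq_prod] using h
  rw [hprod, one_int, mul_one]
  have hnn : (0:ℝ) ≤ c ^ 2 * (2 * α ^ 2 + 8 * β ^ 2) := by positivity
  calc c ^ 2 * (2 * α ^ 2 + 8 * β ^ 2) * ∫ x in Set.Ioo (0:ℝ) 1, Real.exp (-(x / t))
      ≤ c ^ 2 * (2 * α ^ 2 + 8 * β ^ 2) * t := mul_le_mul_of_nonneg_left (exp_int_le ht) hnn
    _ = c ^ 2 * ((2 * α ^ 2 + 8 * β ^ 2) * t) := by ring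

lemma volume_usq : (volume : Measure (ℝ × ℝ)) usq = 1 := by
  rw [show usq = Set.Ioo (0:ℝ) 1 ×ˢ Set.Ioo (0:ℝ) 1 from rfl,
    MeasureTheory.Measure.volume_eq_prod, MeasureTheory.Measure.prod_prod]
  simp

lemma main_squeeze (F : ℝ → ℝ × ℝ → ℝ) (K : ℝ) (hK : 0 ≤ K)
    (h : ∀ t : ℝ, t ∈ Set.Ioo (0:ℝ) 1 → ∃ c α β : ℝ, ∃ m : ℕ,
      F t = Gf t c α β m ∧ c ^ 2 ≤ 1 ∧ 2 * α ^ 2 + 8 * β ^ 2 ≤ K) :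
    Tendsto (fun t => ∫ x in usq, (F t x) ^ 2) (nhdsWithin 0 (Set.Ioi 0)) (nhds 0) := by
  have hmem : Set.Ioo (0:ℝ) 1 ∈ nhdsWithin 0 (Set.Ioi 0) :=
    Ioo_mem_nhdsGT_of_mem (Set.left_mem_Ico.2 one_pos)
  apply tendsto_of_tendsto_of_tendsto_of_le_of_le' (g := fun _ : ℝ => (0:ℝ))
    (h := fun t : ℝ => K * t)
  · exact tendsto_const_nhds
  · have h1 : Tendsto (fun t : ℝ => K * t) (nhdsWithin 0 (Set.Ioi 0)) (nhds (K * 0)) :=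
      (tendsto_id.const_mul K).mono_left nhdsWithin_le_nhds
    simpa using h1
  · filter_upwards [hmem] with t _
    exact int_sq_nonneg _
  · filter_upwards [hmem] with t ht
    obtain ⟨c, α, β, m, hF, hc, hKb⟩ := h t ht
    rw [hF]
    have h1 := Gf_sq_int_le c α β m ht.1
    have h2 : c ^ 2 * ((2 * α ^ 2 + 8 * β ^ 2) * t) ≤ K * t := by
      have hA : (0:ℝ) ≤ 2 * α ^ 2 + 8 * β ^ 2 := by positivity
      nlinarith [mul_nonneg (mul_nonneg (sub_nonneg.2 hc) hA) ht.1.le,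
        mul_nonneg (sub_nonneg.2 hKb) ht.1.le]
    linarith

lemma Ff_sq_int_le (c : ℝ) (j k : ℕ) (c' α β : ℝ) (m : ℕ) {t : ℝ} (ht : 0 < t) (ht1 : t ≤ 1)
    (hc : c ^ 2 ≤ 4096) (hc' : c' ^ 2 ≤ 1) (hKb : 2 * α ^ 2 + 8 * β ^ 2 ≤ 30) :
    ∫ y in usq, (Ff c j k t c' α β m y) ^ 2 ≤ 8252 := by
  have hb : ∀ y ∈ usq, (Ff c j k t c' α β m y) ^ 2
      ≤ 2 * c ^ 2 + 2 * (Gf t c' α β m y) ^ 2 := by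
    intro y _
    have e : Ff c j k t c' α β m y
        = c * (Tf j (π * y.1) * Tf k (π * y.2)) + Gf t c' α β m y := rfl
    rw [e]
    have h1 : (c * (Tf j (π * y.1) * Tf k (π * y.2))) ^ 2 ≤ c ^ 2 := by
      have a1 := Tf_sq_le_one j (π * y.1)
      have a2 := Tf_sq_le_one k (π * y.2)
      have hT : (Tf j (π * y.1)) ^ 2 * (Tf k (π * y.2)) ^ 2 ≤ 1 := by
        calc (Tf j (π * y.1)) ^ 2 * (Tf k (π * y.2)) ^ 2
            ≤ 1 * (Tf k (π * y.2)) ^ 2 := mul_le_mul_of_nonneg_right a1 (sq_nonneg _)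
          _ = (Tf k (π * y.2)) ^ 2 := one_mul _
          _ ≤ 1 := a2
      calc (c * (Tf j (π * y.1) * Tf k (π * y.2))) ^ 2
          = c ^ 2 * ((Tf j (π * y.1)) ^ 2 * (Tf k (π * y.2)) ^ 2) := by ring
        _ ≤ c ^ 2 * 1 := mul_le_mul_of_nonneg_left hT (sq_nonneg c)
        _ = c ^ 2 := mul_one _
    nlinarith [sq_nonneg (c * (Tf j (π * y.1) * Tf k (π * y.2)) - Gf t c' α β m y)]
  have hInt1 : IntegrableOn (fun y : ℝ × ℝ => (Ff c j k t c' α β m y) ^ 2) usq :=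
    integrableOn_usq ((cont_Ff c j k t c' α β m).pow 2)
  have hIntG : IntegrableOn (fun y : ℝ × ℝ => (Gf t c' α β m y) ^ 2) usq :=
    integrableOn_usq ((cont_Gf t c' α β m).pow 2)
  have hInt2 : IntegrableOn (fun y : ℝ × ℝ => 2 * c ^ 2 + 2 * (Gf t c' α β m y) ^ 2) usq :=
    (integrableOn_usq continuous_const).add (hIntG.const_mul 2)
  have step := setIntegral_mono_on hInt1 hInt2 meas_usq hb
  have hsplit : ∫ y in usq, (2 * c ^ 2 + 2 * (Gf t c' α β m y) ^ 2)
      = 2 * c ^ 2 + 2 * ∫ y in usq, (Gf t c' α β m y) ^ 2 := by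
    have hgg : ∫ a in usq, 2 * (Gf t c' α β m a) ^ 2
        = 2 * ∫ y in usq, (Gf t c' α β m y) ^ 2 :=
      MeasureTheory.integral_const_mul 2 _
    rw [MeasureTheory.integral_add (integrableOn_usq continuous_const) (hIntG.const_mul 2),
      hgg, MeasureTheory.setIntegral_const, MeasureTheory.measureReal_def, volume_usq]
    simp
  rw [hsplit] at step
  have hG := Gf_sq_int_le c' α β m ht
  have hGle : ∫ y in usq, (Gf t c' α β m y) ^ 2 ≤ 30 := by
    have hA : (0:ℝ) ≤ 2 * α ^ 2 + 8 * β ^ 2 := by positivity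
    have : c' ^ 2 * ((2 * α ^ 2 + 8 * β ^ 2) * t) ≤ 30 := by
      nlinarith [mul_nonneg (mul_nonneg (sub_nonneg.2 hc') hA) ht.le,
        mul_nonneg (sub_nonneg.2 hKb) ht.le, mul_nonneg hA ht.le]
    linarith
  linarith

lemma cos_sq_int : ∫ x in Set.Ioo (0:ℝ) 1, Real.cos (π * x) ^ 2 = 1 / 2 := by
  rw [← MeasureTheory.integral_Ioc_eq_integral_Ioo,
    ← intervalIntegral.integral_of_le (by norm_num : (0:ℝ) ≤ 1)]
  have h := intervalIntegral.integral_comp_mul_left (a := 0) (b := 1)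
    (fun u : ℝ => Real.cos u ^ 2) Real.pi_ne_zero
  rw [h]
  rw [integral_cos_sq]
  simp [Real.sin_pi]
  field_simp

lemma sin_sq_int : ∫ x in Set.Ioo (0:ℝ) 1, Real.sin (π * x) ^ 2 = 1 / 2 := by
  rw [← MeasureTheory.integral_Ioc_eq_integral_Ioo,
    ← intervalIntegral.integral_of_le (by norm_num : (0:ℝ) ≤ 1)]
  have h := intervalIntegral.integral_comp_mul_left (a := 0) (b := 1)
    (fun u : ℝ => Real.sin u ^ 2) Real.pi_ne_zero
  rw [h]
  rw [integral_sin_sq]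
  simp [Real.sin_pi]
  field_simp

lemma trig_int : ∫ y in usq, (π * (Tf 0 (π * y.1) * Tf 3 (π * y.2))) ^ 2 = π ^ 2 / 4 := by
  have he : ∀ y : ℝ × ℝ, (π * (Tf 0 (π * y.1) * Tf 3 (π * y.2))) ^ 2
      = (π ^ 2 * Real.cos (π * y.1) ^ 2) * Real.sin (π * y.2) ^ 2 := by
    intro y; rw [Tf0, Tf3]; ring
  simp only [he]
  have h := MeasureTheory.setIntegral_prod_mul (μ := (volume : Measure ℝ))
    (ν := (volume : Measure ℝ)) (fun x : ℝ => π ^ 2 * Real.cos (π * x) ^ 2)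
    (fun x : ℝ => Real.sin (π * x) ^ 2) (Set.Ioo 0 1) (Set.Ioo 0 1)
  rw [show usq = Set.Ioo (0:ℝ) 1 ×ˢ Set.Ioo (0:ℝ) 1 from rfl, MeasureTheory.Measure.volume_eq_prod, h,
    MeasureTheory.integral_const_mul, cos_sq_int, sin_sq_int]
  ring

lemma hasDerivAt_sin_pi1 (w x : ℝ) :
    HasDerivAt (fun s : ℝ => Real.sin (π * s) * w) (π * Real.cos (π * x) * w) x := by
  have h1 : HasDerivAt (fun s : ℝ => Real.sin (π * s)) (π * Real.cos (π * x)) x := by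
    have h0 := (Real.hasDerivAt_sin (π * x)).comp x ((hasDerivAt_id x).const_mul π)
    have e : π * Real.cos (π * x) = Real.cos (π * x) * (π * 1) := by ring
    rw [e]; exact h0
  simpa using h1.mul_const w

lemma hasDerivAt_sin_pi2 (w x : ℝ) :
    HasDerivAt (fun s : ℝ => w * Real.sin (π * s)) (w * (π * Real.cos (π * x))) x := by
  have h1 : HasDerivAt (fun s : ℝ => Real.sin (π * s)) (π * Real.cos (π * x)) x := by
    have h0 := (Real.hasDerivAt_sin (π * x)).comp x ((hasDerivAt_id x).const_mul π)
    have e : π * Real.cos (π * x) = Real.cos (π * x) * (π * 1) := by ring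
    rw [e]; exact h0
  simpa using h1.const_mul w

lemma theta1_eq {t : ℝ} (ht : 0 < t) : θ1 t = Ff π 0 3 t (t ^ 2) 1 (-1) 0 := by
  funext y
  have hA := hasDerivAt_P_scaled t (t ^ 3) 0 1 (Tf 0 (y.2 / t)) y.1
  have hB := hasDerivAt_sin_pi1 (Real.sin (π * y.2)) y.1
  have hsum := hA.add hB
  simp only [Pi.add_def] at hsum
  have heq : (fun s : ℝ => t ^ 3 * (Pf 0 1 (s / t) * Tf 0 (y.2 / t))
      + Real.sin (π * s) * Real.sin (π * y.2)) = (fun s => vt t (s, y.2)) := by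
    funext s
    simp only [vt, V, g, Pf, Tf0]
    ring
  rw [heq] at hsum
  have h3 : t ^ 3 / t = t ^ 2 := by
    rw [pow_succ]; exact mul_div_cancel_right₀ _ ht.ne'
  have hval : Ff π 0 3 t (t ^ 2) 1 (-1) 0 y
      = t ^ 3 / t * (Pf (1 - 0) (-1) (y.1 / t) * Tf 0 (y.2 / t))
        + π * Real.cos (π * y.1) * Real.sin (π * y.2) := by
    simp only [Ff, Gf, Tf0, Tf3, h3]
    norm_num
    ring
  show deriv (fun s => vt t (s, y.2)) y.1 = Ff π 0 3 t (t ^ 2) 1 (-1) 0 y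
  rw [hval]
  exact hsum.deriv

lemma theta2_eq {t : ℝ} (ht : 0 < t) : θ2 t = Ff π 3 0 t (t ^ 2) 0 1 1 := by
  funext y
  have hA := hasDerivAt_T_scaled t (t ^ 3) 0 (Pf 0 1 (y.1 / t)) y.2
  have hB := hasDerivAt_sin_pi2 (Real.sin (π * y.1)) y.2
  have hsum := hA.add hB
  simp only [Pi.add_def] at hsum
  have heq : (fun s : ℝ => t ^ 3 * (Pf 0 1 (y.1 / t) * Tf 0 (s / t))
      + Real.sin (π * y.1) * Real.sin (π * s)) = (fun s => vt t (y.1, s)) := by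
    funext s
    simp only [vt, V, g, Pf, Tf0]
    ring
  rw [heq] at hsum
  have h3 : t ^ 3 / t = t ^ 2 := by
    rw [pow_succ]; exact mul_div_cancel_right₀ _ ht.ne'
  have hval : Ff π 3 0 t (t ^ 2) 0 1 1 y
      = t ^ 3 / t * (Pf 0 1 (y.1 / t) * Tf (0 + 1) (y.2 / t))
        + Real.sin (π * y.1) * (π * Real.cos (π * y.2)) := by
    simp only [Ff, Gf, Tf0, Tf3, h3]
    norm_num
    ring
  show deriv (fun s => vt t (y.1, s)) y.2 = Ff π 3 0 t (t ^ 2) 0 1 1 y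
  rw [hval]
  exact hsum.deriv

lemma pd1_g : pd1 g = fun y => π * Real.cos (π * y.1) * Real.sin (π * y.2) := by
  funext y
  exact (hasDerivAt_sin_pi1 (Real.sin (π * y.2)) y.1).deriv

lemma pd2_g : pd2 g = fun y => Real.sin (π * y.1) * (π * Real.cos (π * y.2)) := by
  funext y
  exact (hasDerivAt_sin_pi2 (Real.sin (π * y.1)) y.2).deriv

lemma diff1 {t : ℝ} (ht : 0 < t) :
    (fun y => θ1 t y - pd1 g y) = Gf t (t ^ 2) 1 (-1) 0 := by
  funext y
  rw [theta1_eq ht, pd1_g]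
  simp only [Ff, Tf0, Tf3]
  ring

lemma diff2 {t : ℝ} (ht : 0 < t) :
    (fun y => θ2 t y - pd2 g y) = Gf t (t ^ 2) 0 1 1 := by
  funext y
  rw [theta2_eq ht, pd2_g]
  simp only [Ff, Tf0, Tf3]
  ring

lemma pi_sq_le : π ^ 2 ≤ 16 := by nlinarith [Real.pi_le_four, Real.pi_pos]

lemma cb1 : (π : ℝ) ^ 2 ≤ 4096 := by nlinarith [pi_sq_le]
lemma cb2 : ((π * π : ℝ)) ^ 2 ≤ 4096 := by nlinarith [pi_sq_le, sq_nonneg π]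
lemma cb3 : ((π * π * π : ℝ)) ^ 2 ≤ 4096 := by
  nlinarith [pi_sq_le, sq_nonneg π, mul_nonneg (sub_nonneg.2 pi_sq_le) (sq_nonneg (π * π)),
    mul_nonneg (sub_nonneg.2 pi_sq_le) (sq_nonneg π)]

lemma lower_bound {t : ℝ} (ht : 0 < t) (ht' : t ≤ π ^ 2 / 160) :
    π ^ 2 / 16 ≤ ∫ y in usq, (θ1 t y) ^ 2 := by
  have ht1 : t ≤ 1 := by nlinarith [pi_sq_le]
  rw [theta1_eq ht]
  have hAB : ∀ y ∈ usq, (1 / 2 : ℝ) * (π * (Tf 0 (π * y.1) * Tf 3 (π * y.2))) ^ 2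
      - (Gf t (t ^ 2) 1 (-1) 0 y) ^ 2 ≤ (Ff π 0 3 t (t ^ 2) 1 (-1) 0 y) ^ 2 := by
    intro y _
    have e : Ff π 0 3 t (t ^ 2) 1 (-1) 0 y
        = π * (Tf 0 (π * y.1) * Tf 3 (π * y.2)) + Gf t (t ^ 2) 1 (-1) 0 y := rfl
    rw [e]
    nlinarith [sq_nonneg (π * (Tf 0 (π * y.1) * Tf 3 (π * y.2)) + 2 * Gf t (t ^ 2) 1 (-1) 0 y)]
  have hcontT : Continuous (fun y : ℝ × ℝ => (π * (Tf 0 (π * y.1) * Tf 3 (π * y.2))) ^ 2) :=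
    ((continuous_const.mul (((cont_Tf 0).comp (continuous_const.mul continuous_fst)).mul
      ((cont_Tf 3).comp (continuous_const.mul continuous_snd))))).pow 2
  have hIntT : IntegrableOn (fun y : ℝ × ℝ => (π * (Tf 0 (π * y.1) * Tf 3 (π * y.2))) ^ 2) usq :=
    integrableOn_usq hcontT
  have hIntG : IntegrableOn (fun y : ℝ × ℝ => (Gf t (t ^ 2) 1 (-1) 0 y) ^ 2) usq :=
    integrableOn_usq ((cont_Gf t (t ^ 2) 1 (-1) 0).pow 2)
  have hInt1 : IntegrableOn (fun y : ℝ × ℝ =>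
      (1 / 2 : ℝ) * (π * (Tf 0 (π * y.1) * Tf 3 (π * y.2))) ^ 2
      - (Gf t (t ^ 2) 1 (-1) 0 y) ^ 2) usq := (hIntT.const_mul _).sub hIntG
  have step := setIntegral_mono_on hInt1
    (integrableOn_usq ((cont_Ff π 0 3 t (t ^ 2) 1 (-1) 0).pow 2)) meas_usq hAB
  have hhalf : ∫ y in usq, (1 / 2 : ℝ) * (π * (Tf 0 (π * y.1) * Tf 3 (π * y.2))) ^ 2
      = (1 / 2 : ℝ) * ∫ y in usq, (π * (Tf 0 (π * y.1) * Tf 3 (π * y.2))) ^ 2 :=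
    MeasureTheory.integral_const_mul _ _
  rw [MeasureTheory.integral_sub (hIntT.const_mul _) hIntG, hhalf, trig_int] at step
  have hG := Gf_sq_int_le (t ^ 2) 1 (-1) 0 ht
  have hGle : ∫ y in usq, (Gf t (t ^ 2) 1 (-1) 0 y) ^ 2 ≤ 10 * t := by
    have h2t : t ^ 2 ≤ 1 := by nlinarith [mul_nonneg ht.le (sub_nonneg.2 ht1)]
    have h4 : (t ^ 2) ^ 2 ≤ 1 := by
      nlinarith [sq_nonneg t, h2t, mul_nonneg (sq_nonneg t) (sub_nonneg.2 h2t)]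
    have : (t ^ 2) ^ 2 * ((2 * (1:ℝ) ^ 2 + 8 * (-1:ℝ) ^ 2) * t) ≤ 1 * ((2 * (1:ℝ) ^ 2 + 8 * (-1:ℝ) ^ 2) * t) :=
      mul_le_mul_of_nonneg_right h4 (by positivity)
    nlinarith [hG]
  simp only [Pi.pow_apply] at step
  linarith
theorem stmt_12 (β₀ β₁ κ : ℝ) (hβ₀ : 0 < β₀) (hβ₁ : 0 < β₁) (hκ : 0 < κ) :
    (∀ a b : ℕ, a + b ≤ 2 →
      Tendsto
        (fun t : ℝ =>
          ∫ x in usq, (pd1^[a] (pd2^[b] (fun y => θ1 t y - pd1 g y)) x) ^ 2)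
        (nhdsWithin 0 (Set.Ioi 0)) (nhds 0) ∧
      Tendsto
        (fun t : ℝ =>
          ∫ x in usq, (pd1^[a] (pd2^[b] (fun y => θ2 t y - pd2 g y)) x) ^ 2)
        (nhdsWithin 0 (Set.Ioi 0)) (nhds 0)) ∧
    ∃ c C t₀ : ℝ, 0 < c ∧ 0 < t₀ ∧
      ∀ t : ℝ, 0 < t → t < t₀ →
        c ≤ (∑ a ∈ Finset.range 3, ∑ b ∈ Finset.range (3 - a),
              ((∫ x in usq, (pd1^[a] (pd2^[b] (θ1 t)) x) ^ 2)
                + (∫ x in usq, (pd1^[a] (pd2^[b] (θ2 t)) x) ^ 2))) ∧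
        (∑ a ∈ Finset.range 3, ∑ b ∈ Finset.range (3 - a),
              ((∫ x in usq, (pd1^[a] (pd2^[b] (θ1 t)) x) ^ 2)
                + (∫ x in usq, (pd1^[a] (pd2^[b] (θ2 t)) x) ^ 2))) ≤ C := by
  constructor
  · intro a b hab
    have ha : a ≤ 2 := by omega
    have hb : b ≤ 2 := by omega
    interval_cases a <;> interval_cases b <;>
        (try (norm_num at hab)) <;> constructor
    · refine main_squeeze _ 30 (by norm_num) ?_
      intro t ht
      have e1 : t ^ 2 / t = t := by rw [pow_two]; exact mul_div_cancel_right₀ t ht.1.ne'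
      have h2t : t ^ 2 ≤ 1 := by nlinarith [mul_nonneg ht.1.le (sub_nonneg.2 ht.2.le)]
      refine ⟨t ^ 2, 1, -1, 0, ?_, ?_, ?_⟩
      · simp only [Function.iterate_succ, Function.iterate_zero, Function.iterate_one,
          Function.comp_apply, id_eq]
        rw [diff1 ht.1]
      · nlinarith [sq_nonneg t, h2t, mul_nonneg (sq_nonneg t) (sub_nonneg.2 h2t)]
      · norm_num
    · refine main_squeeze _ 30 (by norm_num) ?_
      intro t ht
      have e1 : t ^ 2 / t = t := by rw [pow_two]; exact mul_div_cancel_right₀ t ht.1.ne'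
      have h2t : t ^ 2 ≤ 1 := by nlinarith [mul_nonneg ht.1.le (sub_nonneg.2 ht.2.le)]
      refine ⟨t ^ 2, 0, 1, 1, ?_, ?_, ?_⟩
      · simp only [Function.iterate_succ, Function.iterate_zero, Function.iterate_one,
          Function.comp_apply, id_eq]
        rw [diff2 ht.1]
      · nlinarith [sq_nonneg t, h2t, mul_nonneg (sq_nonneg t) (sub_nonneg.2 h2t)]
      · norm_num
    · refine main_squeeze _ 30 (by norm_num) ?_
      intro t ht
      have e1 : t ^ 2 / t = t := by rw [pow_two]; exact mul_div_cancel_right₀ t ht.1.ne'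
      have h2t : t ^ 2 ≤ 1 := by nlinarith [mul_nonneg ht.1.le (sub_nonneg.2 ht.2.le)]
      refine ⟨t ^ 2 / t, 1, -1, 0 + 1, ?_, ?_, ?_⟩
      · simp only [Function.iterate_succ, Function.iterate_zero, Function.iterate_one,
          Function.comp_apply, id_eq]
        rw [diff1 ht.1, pd2_Gf]
      · rw [e1]; exact h2t
      · norm_num
    · refine main_squeeze _ 30 (by norm_num) ?_
      intro t ht
      have e1 : t ^ 2 / t = t := by rw [pow_two]; exact mul_div_cancel_right₀ t ht.1.ne'
      have h2t : t ^ 2 ≤ 1 := by nlinarith [mul_nonneg ht.1.le (sub_nonneg.2 ht.2.le)]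
      refine ⟨t ^ 2 / t, 0, 1, 1 + 1, ?_, ?_, ?_⟩
      · simp only [Function.iterate_succ, Function.iterate_zero, Function.iterate_one,
          Function.comp_apply, id_eq]
        rw [diff2 ht.1, pd2_Gf]
      · rw [e1]; exact h2t
      · norm_num
    · refine main_squeeze _ 30 (by norm_num) ?_
      intro t ht
      have e1 : t ^ 2 / t = t := by rw [pow_two]; exact mul_div_cancel_right₀ t ht.1.ne'
      have h2t : t ^ 2 ≤ 1 := by nlinarith [mul_nonneg ht.1.le (sub_nonneg.2 ht.2.le)]
      refine ⟨t ^ 2 / t / t, 1, -1, 0 + 1 + 1, ?_, ?_, ?_⟩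
      · simp only [Function.iterate_succ, Function.iterate_zero, Function.iterate_one,
          Function.comp_apply, id_eq]
        rw [diff1 ht.1, pd2_Gf, pd2_Gf]
      · rw [e1, div_self ht.1.ne']; norm_num
      · norm_num
    · refine main_squeeze _ 30 (by norm_num) ?_
      intro t ht
      have e1 : t ^ 2 / t = t := by rw [pow_two]; exact mul_div_cancel_right₀ t ht.1.ne'
      have h2t : t ^ 2 ≤ 1 := by nlinarith [mul_nonneg ht.1.le (sub_nonneg.2 ht.2.le)]
      refine ⟨t ^ 2 / t / t, 0, 1, 1 + 1 + 1, ?_, ?_, ?_⟩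
      · simp only [Function.iterate_succ, Function.iterate_zero, Function.iterate_one,
          Function.comp_apply, id_eq]
        rw [diff2 ht.1, pd2_Gf, pd2_Gf]
      · rw [e1, div_self ht.1.ne']; norm_num
      · norm_num
    · refine main_squeeze _ 30 (by norm_num) ?_
      intro t ht
      have e1 : t ^ 2 / t = t := by rw [pow_two]; exact mul_div_cancel_right₀ t ht.1.ne'
      have h2t : t ^ 2 ≤ 1 := by nlinarith [mul_nonneg ht.1.le (sub_nonneg.2 ht.2.le)]
      refine ⟨t ^ 2 / t, -1 - 1, -(-1), 0, ?_, ?_, ?_⟩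
      · simp only [Function.iterate_succ, Function.iterate_zero, Function.iterate_one,
          Function.comp_apply, id_eq]
        rw [diff1 ht.1, pd1_Gf]
      · rw [e1]; exact h2t
      · norm_num
    · refine main_squeeze _ 30 (by norm_num) ?_
      intro t ht
      have e1 : t ^ 2 / t = t := by rw [pow_two]; exact mul_div_cancel_right₀ t ht.1.ne'
      have h2t : t ^ 2 ≤ 1 := by nlinarith [mul_nonneg ht.1.le (sub_nonneg.2 ht.2.le)]
      refine ⟨t ^ 2 / t, 1 - 0, -1, 1, ?_, ?_, ?_⟩
      · simp only [Function.iterate_succ, Function.iterate_zero, Function.iterate_one,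
          Function.comp_apply, id_eq]
        rw [diff2 ht.1, pd1_Gf]
      · rw [e1]; exact h2t
      · norm_num
    · refine main_squeeze _ 30 (by norm_num) ?_
      intro t ht
      have e1 : t ^ 2 / t = t := by rw [pow_two]; exact mul_div_cancel_right₀ t ht.1.ne'
      have h2t : t ^ 2 ≤ 1 := by nlinarith [mul_nonneg ht.1.le (sub_nonneg.2 ht.2.le)]
      refine ⟨t ^ 2 / t / t, -1 - 1, -(-1), 0 + 1, ?_, ?_, ?_⟩
      · simp only [Function.iterate_succ, Function.iterate_zero, Function.iterate_one,
          Function.comp_apply, id_eq]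
        rw [diff1 ht.1, pd2_Gf, pd1_Gf]
      · rw [e1, div_self ht.1.ne']; norm_num
      · norm_num
    · refine main_squeeze _ 30 (by norm_num) ?_
      intro t ht
      have e1 : t ^ 2 / t = t := by rw [pow_two]; exact mul_div_cancel_right₀ t ht.1.ne'
      have h2t : t ^ 2 ≤ 1 := by nlinarith [mul_nonneg ht.1.le (sub_nonneg.2 ht.2.le)]
      refine ⟨t ^ 2 / t / t, 1 - 0, -1, 1 + 1, ?_, ?_, ?_⟩
      · simp only [Function.iterate_succ, Function.iterate_zero, Function.iterate_one,
          Function.comp_apply, id_eq]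
        rw [diff2 ht.1, pd2_Gf, pd1_Gf]
      · rw [e1, div_self ht.1.ne']; norm_num
      · norm_num
    · refine main_squeeze _ 30 (by norm_num) ?_
      intro t ht
      have e1 : t ^ 2 / t = t := by rw [pow_two]; exact mul_div_cancel_right₀ t ht.1.ne'
      have h2t : t ^ 2 ≤ 1 := by nlinarith [mul_nonneg ht.1.le (sub_nonneg.2 ht.2.le)]
      refine ⟨t ^ 2 / t / t, -(-1) - (-1 - 1), - -(-1), 0, ?_, ?_, ?_⟩
      · simp only [Function.iterate_succ, Function.iterate_zero, Function.iterate_one,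
          Function.comp_apply, id_eq]
        rw [diff1 ht.1, pd1_Gf, pd1_Gf]
      · rw [e1, div_self ht.1.ne']; norm_num
      · norm_num
    · refine main_squeeze _ 30 (by norm_num) ?_
      intro t ht
      have e1 : t ^ 2 / t = t := by rw [pow_two]; exact mul_div_cancel_right₀ t ht.1.ne'
      have h2t : t ^ 2 ≤ 1 := by nlinarith [mul_nonneg ht.1.le (sub_nonneg.2 ht.2.le)]
      refine ⟨t ^ 2 / t / t, -1 - (1 - 0), - -1, 1, ?_, ?_, ?_⟩
      · simp only [Function.iterate_succ, Function.iterate_zero, Function.iterate_one,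
          Function.comp_apply, id_eq]
        rw [diff2 ht.1, pd1_Gf, pd1_Gf]
      · rw [e1, div_self ht.1.ne']; norm_num
      · norm_num
  · refine ⟨π ^ 2 / 16, 100000, π ^ 2 / 160, by positivity, by positivity, ?_⟩
    intro t ht ht'
    have ht1 : t ≤ 1 := by nlinarith [pi_sq_le]
    have e1 : t ^ 2 / t = t := by rw [pow_two]; exact mul_div_cancel_right₀ t ht.ne'
    have h2t : t ^ 2 ≤ 1 := by nlinarith [mul_nonneg ht.le (sub_nonneg.2 ht1)]
    have hcA : (t ^ 2) ^ 2 ≤ 1 := by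
      nlinarith [sq_nonneg t, h2t, mul_nonneg (sq_nonneg t) (sub_nonneg.2 h2t)]
    have hcB : (t ^ 2 / t) ^ 2 ≤ 1 := by rw [e1]; exact h2t
    have hcC : (t ^ 2 / t / t) ^ 2 ≤ 1 := by rw [e1, div_self ht.ne']; norm_num
    have u00a : ∫ x in usq, (θ1 t x) ^ 2 ≤ 8252 := by
      rw [theta1_eq ht]
      exact Ff_sq_int_le _ _ _ _ _ _ _ ht ht1 cb1 hcA (by norm_num)
    have u01a : ∫ x in usq, (pd2 (θ1 t) x) ^ 2 ≤ 8252 := by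
      rw [theta1_eq ht, pd2_Ff]
      exact Ff_sq_int_le _ _ _ _ _ _ _ ht ht1 cb2 hcB (by norm_num)
    have u02a : ∫ x in usq, (pd2 (pd2 (θ1 t)) x) ^ 2 ≤ 8252 := by
      rw [theta1_eq ht, pd2_Ff, pd2_Ff]
      exact Ff_sq_int_le _ _ _ _ _ _ _ ht ht1 cb3 hcC (by norm_num)
    have u10a : ∫ x in usq, (pd1 (θ1 t) x) ^ 2 ≤ 8252 := by
      rw [theta1_eq ht, pd1_Ff]
      exact Ff_sq_int_le _ _ _ _ _ _ _ ht ht1 cb2 hcB (by norm_num)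
    have u11a : ∫ x in usq, (pd1 (pd2 (θ1 t)) x) ^ 2 ≤ 8252 := by
      rw [theta1_eq ht, pd2_Ff, pd1_Ff]
      exact Ff_sq_int_le _ _ _ _ _ _ _ ht ht1 cb3 hcC (by norm_num)
    have u20a : ∫ x in usq, (pd1 (pd1 (θ1 t)) x) ^ 2 ≤ 8252 := by
      rw [theta1_eq ht, pd1_Ff, pd1_Ff]
      exact Ff_sq_int_le _ _ _ _ _ _ _ ht ht1 cb3 hcC (by norm_num)
    have u00b : ∫ x in usq, (θ2 t x) ^ 2 ≤ 8252 := by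
      rw [theta2_eq ht]
      exact Ff_sq_int_le _ _ _ _ _ _ _ ht ht1 cb1 hcA (by norm_num)
    have u01b : ∫ x in usq, (pd2 (θ2 t) x) ^ 2 ≤ 8252 := by
      rw [theta2_eq ht, pd2_Ff]
      exact Ff_sq_int_le _ _ _ _ _ _ _ ht ht1 cb2 hcB (by norm_num)
    have u02b : ∫ x in usq, (pd2 (pd2 (θ2 t)) x) ^ 2 ≤ 8252 := by
      rw [theta2_eq ht, pd2_Ff, pd2_Ff]
      exact Ff_sq_int_le _ _ _ _ _ _ _ ht ht1 cb3 hcC (by norm_num)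
    have u10b : ∫ x in usq, (pd1 (θ2 t) x) ^ 2 ≤ 8252 := by
      rw [theta2_eq ht, pd1_Ff]
      exact Ff_sq_int_le _ _ _ _ _ _ _ ht ht1 cb2 hcB (by norm_num)
    have u11b : ∫ x in usq, (pd1 (pd2 (θ2 t)) x) ^ 2 ≤ 8252 := by
      rw [theta2_eq ht, pd2_Ff, pd1_Ff]
      exact Ff_sq_int_le _ _ _ _ _ _ _ ht ht1 cb3 hcC (by norm_num)
    have u20b : ∫ x in usq, (pd1 (pd1 (θ2 t)) x) ^ 2 ≤ 8252 := by
      rw [theta2_eq ht, pd1_Ff, pd1_Ff]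
      exact Ff_sq_int_le _ _ _ _ _ _ _ ht ht1 cb3 hcC (by norm_num)
    have l1 : π ^ 2 / 16 ≤ ∫ x in usq, (θ1 t x) ^ 2 := lower_bound ht ht'.le
    have hexpand : ∀ f : ℕ → ℕ → ℝ, (∑ a ∈ Finset.range 3, ∑ b ∈ Finset.range (3 - a), f a b)
        = f 0 0 + f 0 1 + f 0 2 + f 1 0 + f 1 1 + f 2 0 := by
      intro f
      simp [Finset.sum_range_succ]
      ring
    rw [hexpand (fun a b => (∫ x in usq, (pd1^[a] (pd2^[b] (θ1 t)) x) ^ 2)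
      + (∫ x in usq, (pd1^[a] (pd2^[b] (θ2 t)) x) ^ 2))]
    simp only [Function.iterate_succ, Function.iterate_zero, Function.iterate_one,
      Function.comp_apply, id_eq]
    constructor
    · linarith [int_sq_nonneg (pd2 (θ1 t)), int_sq_nonneg (pd2 (pd2 (θ1 t))),
        int_sq_nonneg (pd1 (θ1 t)), int_sq_nonneg (pd1 (pd2 (θ1 t))),
        int_sq_nonneg (pd1 (pd1 (θ1 t))), int_sq_nonneg (θ2 t),
        int_sq_nonneg (pd2 (θ2 t)), int_sq_nonneg (pd2 (pd2 (θ2 t))),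
        int_sq_nonneg (pd1 (θ2 t)), int_sq_nonneg (pd1 (pd2 (θ2 t))),
        int_sq_nonneg (pd1 (pd1 (θ2 t)))]
    · linarith

end
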